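/- Let 𝒜 = {A_0, A_1, …} be a canonical collection with bases (b_i). If for some k ≥ 1 the direct sumset A_k ⊕ A_{k+1} ⊕ ⋯ equals Nℤ, where N = b_0 b_1 ⋯ b_{k-1}, then 𝒜 is complete, i.e. an additive system for ℤ. -/

import Mathlib

/-- `prodBases b i = b 0 * b 1 * ⋯ * b (i-1)`. -/
def prodBases (b : ℕ → ℤ) (i : ℕ) : ℤ := ∏ j ∈ Finset.range i, b j

/-- The member sets `A i = (b 0 ⋯ b (i-1)) • T i` of a canonical collection. -/
def memberSet (b : ℕ → ℤ) (T : ℕ → Set ℤ) (i : ℕ) : Set ℤ :=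
  (fun t => prodBases b i * t) '' T i

/-- `T` is a complete residue system modulo `m` containing `0`. -/
def IsCompleteResidueSystem (m : ℤ) (T : Set ℤ) : Prop :=
  0 ∈ T ∧ ∀ r : ℤ, ∃! t, t ∈ T ∧ t ≡ r [ZMOD m]

/-- `a` is a representation of `n` in the collection `A`. -/
def IsRepr (A : ℕ → Set ℤ) (n : ℤ) (a : ℕ → ℤ) : Prop :=
  (∀ i, a i ∈ A i) ∧ (Function.support a).Finite ∧ n = ∑ᶠ i, a i

lemma finsum_succ (a : ℕ → ℤ) (h : (Function.support a).Finite) :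
    ∑ᶠ i, a i = a 0 + ∑ᶠ i, a (i + 1) := by
  obtain ⟨n, hn⟩ := h.bddAbove
  have h1 : Function.support a ⊆ ↑(Finset.range (n + 1)) := by
    intro x hx
    simp only [Finset.coe_range, Set.mem_Iio]
    exact Nat.lt_succ_of_le (hn hx)
  have h2 : Function.support (fun i => a (i + 1)) ⊆ ↑(Finset.range n) := by
    intro x hx
    simp only [Finset.coe_range, Set.mem_Iio]
    have := hn (hx : a (x + 1) ≠ 0)
    omega
  rw [finsum_eq_sum_of_support_subset a h1,
      finsum_eq_sum_of_support_subset _ h2, Finset.sum_range_succ']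
  ring

lemma prodBases_pos (b : ℕ → ℤ) (hb : ∀ i, 1 < b i) (i : ℕ) : 0 < prodBases b i :=
  Finset.prod_pos fun j _ => lt_trans one_pos (hb j)

lemma prodBases_dvd (b : ℕ → ℤ) {i j : ℕ} (h : i ≤ j) : prodBases b i ∣ prodBases b j :=
  Finset.prod_dvd_prod_of_subset _ _ _ (Finset.range_subset_range.2 h)

lemma peel (b : ℕ → ℤ) (T : ℕ → Set ℤ) (hb : ∀ i, 1 < b i)
    (hT : ∀ i, IsCompleteResidueSystem (b i) (T i)) (k : ℕ)
    (hrec : ∀ m : ℤ, ∃! a : ℕ → ℤ,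
      IsRepr (fun j => memberSet b T (k + 1 + j)) (prodBases b (k + 1) * m) a) :
    ∀ m : ℤ, ∃! a : ℕ → ℤ,
      IsRepr (fun j => memberSet b T (k + j)) (prodBases b k * m) a := by
  intro m
  set P := prodBases b k with hP
  have hPpos : 0 < P := prodBases_pos b hb k
  have hPsucc : prodBases b (k + 1) = P * b k := Finset.prod_range_succ _ _
  -- unique t in T k congruent to m mod b k
  obtain ⟨t, ⟨htT, htm⟩, htuniq⟩ := (hT k).2 m
  -- m - t = b k * m'
  obtain ⟨m', hm'⟩ : b k ∣ m - t := Int.ModEq.dvd htm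
  obtain ⟨a', ha', ha'uniq⟩ := hrec m'
  -- assemble
  set a : ℕ → ℤ := fun i => match i with | 0 => P * t | j + 1 => a' j with ha
  have hmem_shift : ∀ j, memberSet b T (k + (j + 1)) = memberSet b T (k + 1 + j) := by
    intro j; rw [show k + (j + 1) = k + 1 + j by omega]
  have hrepr : IsRepr (fun j => memberSet b T (k + j)) (P * m) a := by
    refine ⟨?_, ?_, ?_⟩
    · intro i
      match i with
      | 0 => exact ⟨t, htT, rfl⟩
      | j + 1 =>
        have := ha'.1 j
        simpa [hmem_shift j] using this
    · apply Set.Finite.subset (Set.Finite.union (Set.finite_singleton 0)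
        (Set.Finite.image (· + 1) ha'.2.1))
      intro x hx
      cases x with
      | zero => exact Or.inl rfl
      | succ j => exact Or.inr ⟨j, hx, rfl⟩
    · have hfin : (Function.support a).Finite := by
        apply Set.Finite.subset (Set.Finite.union (Set.finite_singleton 0)
          (Set.Finite.image (· + 1) ha'.2.1))
        intro x hx
        cases x with
        | zero => exact Or.inl rfl
        | succ j => exact Or.inr ⟨j, hx, rfl⟩
      rw [finsum_succ a hfin]
      have : ∑ᶠ i, a (i + 1) = ∑ᶠ i, a' i := rfl
      rw [this, ← ha'.2.2, hPsucc]
      show P * m = P * t + P * b k * m'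
      have : m = t + b k * m' := by linarith [hm']
      rw [this]; ring
  refine ⟨a, hrepr, ?_⟩
  rintro c ⟨hcmem, hcfin, hcsum⟩
  -- c 0 = P * s with s ∈ T k
  obtain ⟨s, hsT, hs⟩ := hcmem 0
  -- tail sum divisible by P * b k
  have htaildvd : P * b k ∣ ∑ᶠ i, c (i + 1) := by
    obtain ⟨n, hn⟩ := hcfin.bddAbove
    have h2 : Function.support (fun i => c (i + 1)) ⊆ ↑(Finset.range n) := by
      intro x hx
      simp only [Finset.coe_range, Set.mem_Iio]
      have := hn (hx : c (x + 1) ≠ 0)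
      omega
    rw [finsum_eq_sum_of_support_subset _ h2]
    apply Finset.dvd_sum
    intro i _
    obtain ⟨u, _, hu⟩ := hcmem (i + 1)
    rw [← hu]
    exact Dvd.dvd.mul_right (hPsucc ▸ prodBases_dvd b (by omega : k + 1 ≤ k + (i + 1))) u
  -- deduce s = t
  have hsum0 : P * m = c 0 + ∑ᶠ i, c (i + 1) := by rw [hcsum, finsum_succ c hcfin]
  have hst : s = t := by
    apply htuniq s
    refine ⟨hsT, ?_⟩
    rw [Int.modEq_iff_dvd]
    obtain ⟨q, hq⟩ := htaildvd
    have : P * (m - s) = P * (b k * q) := by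
      have : P * s = c 0 := by simpa using hs
      linarith [hsum0, hq, this]
    have hms : m - s = b k * q := by
      exact mul_left_cancel₀ (ne_of_gt hPpos) this
    exact ⟨q, by linarith⟩
  have hc0 : c 0 = P * t := by rw [← hs, hst]; rfl
  -- tail of c is a representation for m'
  have hctail : IsRepr (fun j => memberSet b T (k + 1 + j)) (prodBases b (k + 1) * m')
      (fun j => c (j + 1)) := by
    refine ⟨?_, ?_, ?_⟩
    · intro j
      have := hcmem (j + 1)
      simpa [← hmem_shift j] using this
    · have hinj : Function.Injective (fun j : ℕ => j + 1) := fun x y h => by simpa using h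
      exact Set.Finite.subset (hcfin.preimage hinj.injOn) (fun x hx => hx)
    · rw [hPsucc]
      have : P * m = P * t + P * (b k * m') := by rw [← hm']; ring
      linarith [hsum0, hc0, this]
  have hctail' : (fun j => c (j + 1)) = a' := ha'uniq _ hctail
  funext i
  match i with
  | 0 => exact hc0
  | j + 1 => exact congrFun hctail' j

/-- If for some `k ≥ 1` the direct sumset `A_k ⊕ A_{k+1} ⊕ ⋯` of a canonical collection
equals `Nℤ` with `N = b_0 ⋯ b_{k-1}`, then the collection is complete, i.e. an additive
system for `ℤ`. -/
theorem complete_of_tail_sumset_eq_NZ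
    (b : ℕ → ℤ) (T : ℕ → Set ℤ)
    (hb : ∀ i, 1 < b i)
    (hT : ∀ i, IsCompleteResidueSystem (b i) (T i))
    (k : ℕ) (hk : 1 ≤ k) (N : ℤ) (hN : N = ∏ j ∈ Finset.range k, b j)
    (htail : ∀ m : ℤ, ∃! a : ℕ → ℤ,
        IsRepr (fun j => memberSet b T (k + j)) (N * m) a) :
    ∀ n : ℤ, ∃! a : ℕ → ℤ, IsRepr (memberSet b T) n a := by
  have hQ : ∀ d : ℕ, ∀ m : ℤ, ∃! a : ℕ → ℤ,
      IsRepr (fun j => memberSet b T (k - d + j)) (prodBases b (k - d) * m) a := by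
    intro d
    induction d with
    | zero =>
      intro m
      show ∃! a : ℕ → ℤ, IsRepr (fun j => memberSet b T (k + j)) (prodBases b k * m) a
      rw [show prodBases b k = N from hN.symm]
      exact htail m
    | succ d ih =>
      by_cases hd : d < k
      · have h1 : k - (d + 1) + 1 = k - d := by omega
        exact peel b T hb hT (k - (d + 1)) (by rw [h1]; exact ih)
      · have h2 : k - (d + 1) = k - d := by omega
        rw [h2]; exact ih
  intro n
  have hfin := hQ k n
  simp only [Nat.sub_self, Nat.zero_add,
    show prodBases b 0 = 1 from Finset.prod_range_zero b, one_mul] at hfin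
  exact hfin
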